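/- Let k be a field of characteristic zero, X a set, and A a subalgebra of the k-algebra of all functions X → k. For a ∈ A, one has da = 0 in Ω¹_{A|k} if and only if a takes only finitely many values on X. -/

import Mathlib

universe u


open TrivSqZeroExt in
theorem exists_derivation_extend {R : Type*} {A S : Type u} [CommRing R] [CommRing A] [CommRing S]
    [Algebra R A] [Algebra R S] [Algebra A S] [IsScalarTower R A S]
    [Algebra.FormallySmooth A S] (D : Derivation R A S) :
    ∃ D' : Derivation R S S, ∀ x : A, D' (algebraMap A S x) = D x := by
  classical
  have hφmul : ∀ a b : A,
      (inl (algebraMap A S (a * b)) + inr (D (a * b)) : TrivSqZeroExt S S)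
        = (inl (algebraMap A S a) + inr (D a)) * (inl (algebraMap A S b) + inr (D b)) := by
    intro a b
    rw [mul_add, add_mul, add_mul, inl_mul_inl, inl_mul_inr, inr_mul_inl, inr_mul_inr,
      map_mul, Derivation.leibniz]
    rw [op_smul_eq_smul, algebraMap_smul, algebraMap_smul]
    rw [inr_add, add_zero]
    ring_nf
  let φ : A →+* TrivSqZeroExt S S :=
  { toFun := fun a => inl (algebraMap A S a) + inr (D a)
    map_one' := by simp
    map_mul' := fun a b => hφmul a b
    map_zero' := by simp
    map_add' := fun a b => by
      show inl (algebraMap A S (a + b)) + inr (D (a + b)) = _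
      rw [map_add, map_add, inl_add, inr_add]; abel_nf }
  letI : Algebra A (TrivSqZeroExt S S) := φ.toAlgebra
  let I : Ideal (TrivSqZeroExt S S) := RingHom.ker (fstHom S S S : TrivSqZeroExt S S →ₐ[S] S)
  have hIfst : ∀ x ∈ I, fst x = 0 := fun x hx => hx
  have hI2 : I ^ 2 = ⊥ := by
    rw [pow_two, eq_bot_iff]
    refine Ideal.mul_le.mpr fun r hr s hs => ?_
    rw [Ideal.mem_bot]
    ext
    · rw [fst_mul, hIfst r hr, zero_mul, fst_zero]
    · simp [snd_mul, hIfst r hr, hIfst s hs]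
  have hmem : ∀ m : S, (inr m : TrivSqZeroExt S S) ∈ I := fun m => by
    show fstHom S S S (inr m) = 0
    simp
  let g : S →ₐ[A] (TrivSqZeroExt S S) ⧸ I :=
  { toFun := fun s => Ideal.Quotient.mk I (inl s)
    map_one' := by show Ideal.Quotient.mk I (inl (1:S)) = 1; rw [inl_one, map_one]
    map_mul' := fun s s' => by
      show Ideal.Quotient.mk I (inl (s * s')) = Ideal.Quotient.mk I (inl s) * Ideal.Quotient.mk I (inl s')
      rw [← map_mul, inl_mul_inl]
    map_zero' := by show Ideal.Quotient.mk I (inl (0:S)) = 0; rw [inl_zero, map_zero]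
    map_add' := fun s s' => by
      show Ideal.Quotient.mk I (inl (s + s')) = Ideal.Quotient.mk I (inl s) + Ideal.Quotient.mk I (inl s')
      rw [← map_add, inl_add]
    commutes' := fun a => by
      show Ideal.Quotient.mk I (inl (algebraMap A S a)) = Ideal.Quotient.mk I (φ a)
      rw [Ideal.Quotient.mk_eq_mk_iff_sub_mem]
      have h : inl (algebraMap A S a) - φ a = -(inr (D a)) := by
        show inl (algebraMap A S a) - (inl (algebraMap A S a) + inr (D a)) = _
        abel
      rw [h]
      exact I.neg_mem (hmem _) }
  let σ : S →ₐ[A] TrivSqZeroExt S S :=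
    Algebra.FormallySmooth.lift I ⟨2, by rw [hI2]; rfl⟩ g
  have hσ : ∀ s : S, Ideal.Quotient.mk I (σ s) = Ideal.Quotient.mk I (inl s) := fun s =>
    AlgHom.congr_fun (Algebra.FormallySmooth.comp_lift I ⟨2, by rw [hI2]; rfl⟩ g) s
  have hfst : ∀ s : S, fst (σ s) = s := by
    intro s
    have := (Ideal.Quotient.mk_eq_mk_iff_sub_mem _ _).mp (hσ s)
    have h2 := hIfst _ this
    rw [fst_sub, fst_inl, sub_eq_zero] at h2
    exact h2
  have hσalg : ∀ x : A, σ (algebraMap A S x) = φ x := fun x => σ.commutes x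
  have hφsnd : ∀ x : A, snd (φ x) = D x := fun x => by
    show snd (inl (algebraMap A S x) + inr (D x)) = D x
    rw [snd_add, snd_inl, snd_inr, zero_add]
  have hφfst : ∀ x : A, fst (φ x) = algebraMap A S x := fun x => by
    show fst (inl (algebraMap A S x) + inr (D x)) = algebraMap A S x
    rw [fst_add, fst_inl, fst_inr, add_zero]
  refine ⟨{ toFun := fun s => snd (σ s)
            map_add' := fun s s' => by
              show snd (σ (s + s')) = snd (σ s) + snd (σ s')
              rw [map_add, snd_add]
            map_smul' := fun r s => by
              show snd (σ (r • s)) = r • snd (σ s)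
              rw [Algebra.smul_def, map_mul, IsScalarTower.algebraMap_apply R A S,
                hσalg, snd_mul, hφsnd, hφfst, Derivation.map_algebraMap, smul_zero, add_zero,
                ← IsScalarTower.algebraMap_apply R A S, algebraMap_smul]
            map_one_eq_zero' := by
              show snd (σ 1) = 0
              rw [map_one, snd_one]
            leibniz' := fun a b => by
              show snd (σ (a * b)) = a • snd (σ b) + b • snd (σ a)
              rw [map_mul, snd_mul, hfst, hfst, op_smul_eq_smul] }, ?_⟩
  intro x
  show snd (σ (algebraMap A S x)) = D x
  rw [hσalg, hφsnd]

set_option maxHeartbeats 1000000 in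
set_option synthInstance.maxHeartbeats 400000 in
theorem D_ne_zero_of_transcendental (k : Type*) {K : Type u} [Field k] [Field K] [Algebra k K]
    [CharZero k] {t : K} (ht : Transcendental k t) :
    KaehlerDifferential.D k K t ≠ 0 := by
  classical
  have hsing : AlgebraicIndependent k ((↑) : ({t} : Set K) → K) := by
    rw [algebraicIndependent_unique_type_iff]
    simpa using ht
  obtain ⟨u, htu, hmax⟩ := exists_maximal_algebraicIndependent ({t} : Set K) Set.univ
    (Set.subset_univ _) hsing
  have htmem : t ∈ u := htu rfl
  have hAI : AlgebraicIndependent k ((↑) : u → K) := hmax.prop.1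
  have hB : IsTranscendenceBasis k ((↑) : u → K) := by
    refine ⟨hAI, fun s hs hus => ?_⟩
    simp only [Subtype.range_coe_subtype, Set.setOf_mem_eq] at *
    exact hmax.eq_of_le ⟨hs, Set.subset_univ _⟩ hus
  set C : Subalgebra k K := Algebra.adjoin k (Set.range ((↑) : u → K)) with hC
  have htC : t ∈ C := Algebra.subset_adjoin ⟨⟨t, htmem⟩, rfl⟩
  haveI halg : Algebra.IsAlgebraic C K := hB.isAlgebraic
  haveI : CharZero K := charZero_of_injective_algebraMap (algebraMap k K).injective
  haveI : CharZero C := charZero_of_injective_algebraMap (algebraMap k C).injective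
  haveI : NoZeroSMulDivisors C K :=
    ⟨fun {c x} h => (mul_eq_zero.mp (h : (c : K) * x = 0)).imp_left Subtype.ext⟩
  letI : Algebra (FractionRing C) K := FractionRing.liftAlgebra C K
  haveI : IsScalarTower C (FractionRing C) K := FractionRing.isScalarTower_liftAlgebra C K
  haveI : Algebra.IsAlgebraic (FractionRing C) K :=
    Algebra.IsAlgebraic.extendScalars (R := C) (S := FractionRing C)
      (IsFractionRing.injective C (FractionRing C))
  haveI : CharZero (FractionRing C) :=
    charZero_of_injective_algebraMap (IsFractionRing.injective C (FractionRing C))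
  haveI : Algebra.IsIntegral (FractionRing C) K := Algebra.IsAlgebraic.isIntegral
  haveI : Algebra.FormallyEtale C (FractionRing C) :=
    Algebra.FormallyEtale.of_isLocalization (nonZeroDivisors C)
  haveI : Algebra.FormallyEtale (FractionRing C) K :=
    Algebra.FormallyEtale.of_isSeparable (FractionRing C) K
  haveI : Algebra.FormallyEtale C K := Algebra.FormallyEtale.comp C (FractionRing C) K
  -- derivation on C
  let e : MvPolynomial u k ≃ₐ[k] C := hAI.aevalEquiv
  let f : MvPolynomial u k →ₐ[k] K := C.val.comp e.toAlgHom
  letI : Algebra (MvPolynomial u k) K := f.toRingHom.toAlgebra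
  let v : u → K := fun i => if i = (⟨t, htmem⟩ : u) then 1 else 0
  let DP : Derivation k (MvPolynomial u k) K := MvPolynomial.mkDerivation k v
  have hsmul : ∀ (p : MvPolynomial u k) (m : K), p • m = ((e p : C) : K) * m := fun p m => rfl
  have hCsmul : ∀ (c : C) (m : K), c • m = (c : K) * m := fun c m => rfl
  let D0 : Derivation k C K :=
  { toLinearMap := DP.toLinearMap ∘ₗ (e.symm.toLinearEquiv.toLinearMap : C →ₗ[k] MvPolynomial u k)
    map_one_eq_zero' := by
      show DP (e.symm 1) = 0
      rw [map_one, Derivation.map_one_eq_zero]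
    leibniz' := fun a b => by
      show DP (e.symm (a * b)) = a • DP (e.symm b) + b • DP (e.symm a)
      rw [map_mul, Derivation.leibniz, hsmul, hsmul, hCsmul, hCsmul,
        AlgEquiv.apply_symm_apply, AlgEquiv.apply_symm_apply] }
  have hD0t : D0 ⟨t, htC⟩ = 1 := by
    have hex : e.symm ⟨t, htC⟩ = MvPolynomial.X (⟨t, htmem⟩ : u) := by
      apply e.injective
      rw [AlgEquiv.apply_symm_apply]
      apply Subtype.ext
      show t = ((e (MvPolynomial.X (⟨t, htmem⟩ : u)) : C) : K)
      rw [AlgebraicIndependent.aevalEquiv_apply_coe, MvPolynomial.aeval_X]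
    show DP (e.symm ⟨t, htC⟩) = 1
    rw [hex, MvPolynomial.mkDerivation_X]
    simp [v]
  obtain ⟨D', hD'⟩ := exists_derivation_extend (R := k) (A := C) (S := K) D0
  intro h0
  have h1 : D' t = 0 := by
    rw [← D'.liftKaehlerDifferential_comp_D t, h0, map_zero]
  have h2 : D' t = 1 := by
    have := hD' ⟨t, htC⟩
    rwa [hD0t] at this
  rw [h1] at h2
  exact zero_ne_one h2

set_option maxHeartbeats 1000000 in
set_option synthInstance.maxHeartbeats 400000 in
/-- Let `k` be a field of characteristic zero, `X` a set and `A` a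
subalgebra of the `k`-algebra of all functions `X → k`. For `a ∈ A`, one has `da = 0` in
`Ω¹_{A|k}` if and only if `a` takes only finitely many values on `X`. -/
theorem kaehler_D_eq_zero_iff_finite_range
    (k X : Type*) [Field k] [CharZero k] (A : Subalgebra k (X → k)) (a : ↥A) :
    KaehlerDifferential.D k ↥A a = 0 ↔ (Set.range (a : X → k)).Finite := by
  classical
  constructor
  · -- hard direction
    intro hD
    by_contra hinf
    replace hinf : (Set.range (a : X → k)).Infinite := hinf
    haveI hne : Filter.NeBot (Filter.comap (a : X → k) Filter.cofinite) := by
      rw [Filter.comap_neBot_iff]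
      intro t ht
      rw [Filter.mem_cofinite] at ht
      obtain ⟨y, hy⟩ := (hinf.diff ht).nonempty
      obtain ⟨x, rfl⟩ := hy.1
      exact ⟨x, by simpa using hy.2⟩
    obtain ⟨U, hU⟩ := Filter.exists_ultrafilter_le (Filter.comap (a : X → k) Filter.cofinite)
    letI : Algebra k (Filter.Germ (U : Filter X) k) :=
      { toSMul := Filter.Germ.instSMul
        algebraMap := (Filter.Germ.coeRingHom (U : Filter X)).comp (algebraMap k (X → k))
        commutes' := fun c x => mul_comm _ _
        smul_def' := fun c x => by induction x using Filter.Germ.inductionOn; rfl }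
    letI : Algebra A (Filter.Germ (U : Filter X) k) :=
      ((Filter.Germ.coeRingHom (U : Filter X)).comp (A.val : A →+* (X → k))).toAlgebra
    haveI : IsScalarTower k A (Filter.Germ (U : Filter X) k) :=
      IsScalarTower.of_algebraMap_eq fun c => rfl
    haveI : SMulCommClass k A (Filter.Germ (U : Filter X) k) := by
      constructor
      intro c x m
      rw [Algebra.smul_def, Algebra.smul_def, Algebra.smul_def, Algebra.smul_def,
        mul_left_comm]
    set K := Filter.Germ (U : Filter X) k with hK
    let ψ : A →ₐ[k] K := IsScalarTower.toAlgHom k A K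
    have htrans : Transcendental k (ψ a) := by
      rintro ⟨p, hp0, hpeval⟩
      rw [Polynomial.aeval_algHom_apply] at hpeval
      have hev : (Polynomial.aeval a p : X → k) = fun x => Polynomial.eval ((a : X → k) x) p := by
        funext x
        have : ((Pi.evalAlgHom k (fun _ => k) x).comp A.val) (Polynomial.aeval a p)
            = Polynomial.aeval (((Pi.evalAlgHom k (fun _ => k) x).comp A.val) a) p :=
          (Polynomial.aeval_algHom_apply _ _ _).symm
        simpa using this
      have hE : {x | Polynomial.eval ((a : X → k) x) p = 0} ∈ (U : Filter X) := by
        have h0 : ψ (Polynomial.aeval a p) = (0 : K) := hpeval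
        have : ((Polynomial.aeval a p : X → k) : Filter.Germ (U : Filter X) k) = 0 := h0
        rw [hev] at this
        have h2 : (fun x => Polynomial.eval ((a : X → k) x) p) =ᶠ[(U : Filter X)] (0 : X → k) := by
          rw [← Filter.Germ.coe_eq]
          exact this
        simpa [Filter.EventuallyEq, Filter.eventually_iff] using h2
      have hEc : {x | Polynomial.eval ((a : X → k) x) p ≠ 0} ∈ (U : Filter X) := by
        apply hU
        have hroots : {c : k | Polynomial.eval c p ≠ 0} ∈ (Filter.cofinite : Filter k) := by
          rw [Filter.mem_cofinite]
          have : {c : k | Polynomial.eval c p ≠ 0}ᶜ = {c : k | p.IsRoot c} := by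
            ext c; simp [Polynomial.IsRoot]
          rw [this]
          exact Polynomial.finite_setOf_isRoot hp0
        exact Filter.preimage_mem_comap hroots
      have hint := Filter.inter_mem hE hEc
      have : ({x | Polynomial.eval ((a : X → k) x) p = 0} ∩ {x | Polynomial.eval ((a : X → k) x) p ≠ 0}) = ∅ := by
        ext z; simp only [Set.mem_inter_iff, Set.mem_setOf_eq, Set.mem_empty_iff_false, iff_false]
        tauto
      rw [this] at hint
      exact Filter.empty_notMem _ hint
    have hmap : KaehlerDifferential.D k K (algebraMap A K a) = 0 := by
      rw [← KaehlerDifferential.map_D k k A K, hD, map_zero]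
    exact D_ne_zero_of_transcendental k htrans hmap
  · intro hfin
    set s : Finset k := hfin.toFinset with hs
    have hmem : ∀ x : X, (a : X → k) x ∈ s := fun x => hfin.mem_toFinset.mpr ⟨x, rfl⟩
    set P : Polynomial k := ∏ c ∈ s, (Polynomial.X - Polynomial.C c) with hP
    have hevx : ∀ (q : Polynomial k) (x : X), ((Polynomial.aeval a q : A) : X → k) x
        = Polynomial.eval ((a : X → k) x) q := by
      intro q x
      have : ((Pi.evalAlgHom k (fun _ => k) x).comp A.val) (Polynomial.aeval a q)
          = Polynomial.aeval (((Pi.evalAlgHom k (fun _ => k) x).comp A.val) a) q :=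
        (Polynomial.aeval_algHom_apply _ _ _).symm
      simpa using this
    have hPa : Polynomial.aeval a P = 0 := by
      apply Subtype.ext
      funext x
      rw [hevx]
      show Polynomial.eval ((a : X → k) x) P = (0 : X → k) x
      rw [hP, Polynomial.eval_prod]
      refine Eq.trans (Finset.prod_eq_zero (hmem x) ?_) rfl
      simp
    have hP' : ∀ c ∈ s, Polynomial.eval c (Polynomial.derivative P) ≠ 0 := by
      intro c hc
      have hsplit : P = (Polynomial.X - Polynomial.C c) * ∏ d ∈ s.erase c, (Polynomial.X - Polynomial.C d) := by
        rw [hP, ← Finset.mul_prod_erase s _ hc]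
      rw [hsplit, Polynomial.derivative_mul, Polynomial.derivative_sub,
        Polynomial.derivative_X, Polynomial.derivative_C, sub_zero]
      rw [Polynomial.eval_add, Polynomial.eval_mul, Polynomial.eval_mul, Polynomial.eval_one,
        Polynomial.eval_sub, Polynomial.eval_X, Polynomial.eval_C, sub_self, zero_mul, add_zero,
        one_mul, Polynomial.eval_prod]
      refine Finset.prod_ne_zero_iff.mpr fun d hd => ?_
      simp only [Polynomial.eval_sub, Polynomial.eval_X, Polynomial.eval_C]
      exact sub_ne_zero_of_ne (Finset.ne_of_mem_erase hd).symm
    set q : Polynomial k := Lagrange.interpolate s id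
      (fun c => (Polynomial.eval c (Polynomial.derivative P))⁻¹) with hq
    have hqnode : ∀ c ∈ s, Polynomial.eval c q
        = (Polynomial.eval c (Polynomial.derivative P))⁻¹ := by
      intro c hc
      exact Lagrange.eval_interpolate_at_node _ (Set.injOn_id _) hc
    have hunit : Polynomial.aeval a q * Polynomial.aeval a (Polynomial.derivative P) = 1 := by
      apply Subtype.ext
      funext x
      show ((Polynomial.aeval a q : A) : X → k) x * ((Polynomial.aeval a _ : A) : X → k) x = 1
      rw [hevx, hevx, hqnode _ (hmem x)]
      exact inv_mul_cancel₀ (hP' _ (hmem x))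
    have h0 : Polynomial.aeval a (Polynomial.derivative P) • KaehlerDifferential.D k ↥A a = 0 := by
      have hder := (KaehlerDifferential.D k ↥A).map_aeval P a
      rw [hPa, map_zero] at hder
      exact hder.symm
    calc KaehlerDifferential.D k ↥A a
        = (1 : A) • KaehlerDifferential.D k ↥A a := (one_smul A (KaehlerDifferential.D k ↥A a)).symm
      _ = (Polynomial.aeval a q * Polynomial.aeval a (Polynomial.derivative P)) •
            KaehlerDifferential.D k ↥A a := by rw [hunit]
      _ = Polynomial.aeval a q •
            (Polynomial.aeval a (Polynomial.derivative P) • KaehlerDifferential.D k ↥A a) := by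
            exact mul_smul (Polynomial.aeval a q) (Polynomial.aeval a (Polynomial.derivative P)) (KaehlerDifferential.D k ↥A a)
      _ = 0 := by rw [h0]; exact smul_zero (A := Ω[↥A⁄k]) (Polynomial.aeval a q)
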